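/- Let C = C₁ ⊔ C₂ and let B be a conjunction of literals with domain exactly C₁ and target values b : C₁ → {0,1}. Then B is singular for D(C,Ω) if and only if there exists ω* ∈ Ω such that for every assignment c₂* to C₂ and every vector of literal values β : C₁ → {0,1}, D at the assignment whose C₁-coordinates take value b(i) where β(i) = 1 and value 1 − b(i) where β(i) = 0, and which equals c₂* on C₂, equals 1 for ω* if and only if β ≡ 1; equivalently, for every assignment c, D_c(ω*) = 1 if and only if c satisfies B. -/

import Mathlib

/-- An assignment of values to the binary causes indexed by `ι`. -/
abbrev Assign (ι : Type*) := ι → Bool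

/-- A conjunction of literals over `ι`: a partial assignment, where `B i = some v`
means the literal at coordinate `i` has target value `v`, and `B i = none` means
`i` is not in the domain of the conjunction. -/
abbrev Conj (ι : Type*) := ι → Option Bool

/-- An assignment `c` satisfies a conjunction of literals `B`. -/
def Satisfies {ι : Type*} (c : Assign ι) (B : Conj ι) : Prop :=
  ∀ i v, B i = some v → c i = v

/-- `B'` extends `B` : the domain of `B'` contains that of `B` and they agree there. -/
def ConjExtends {ι : Type*} (B B' : Conj ι) : Prop :=
  ∀ i v, B i = some v → B' i = some v

/-- `(A, 𝔅)` is a sufficient cause representation for the family of potential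
outcomes `D`. -/
def IsRepresentation {ι Ω : Type*} (D : Ω → Assign ι → Bool)
    {p : ℕ} (A : Fin p → Ω → Bool) (𝔅 : Fin p → Conj ι) : Prop :=
  ∀ (ω : Ω) (c : Assign ι),
    D ω c = true ↔ ∃ j, A j ω = true ∧ Satisfies c (𝔅 j)

/-- `B` is irreducible for `D(C, Ω)`: every sufficient cause representation
contains some conjunction extending `B`. -/
def IrreducibleConj {ι Ω : Type*} (D : Ω → Assign ι → Bool) (B : Conj ι) : Prop :=
  ∀ (p : ℕ) (A : Fin p → Ω → Bool) (𝔅 : Fin p → Conj ι),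
    IsRepresentation D A 𝔅 → ∃ j, ConjExtends B (𝔅 j)

/-- `B` is a sufficient cause for `D` for the individual `ω`. -/
def SuffCauseFor {ι Ω : Type*} (D : Ω → Assign ι → Bool) (B : Conj ι) (ω : Ω) : Prop :=
  ∀ c : Assign ι, Satisfies c B → D ω c = true

/-- `B` is a minimal sufficient cause for `D` for `ω`: it is a sufficient cause,
but no restriction of `B` to a proper subset of its domain is. -/
def MinSuffCauseFor {ι Ω : Type*} (D : Ω → Assign ι → Bool) (B : Conj ι) (ω : Ω) : Prop :=
  SuffCauseFor D B ω ∧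
    ∀ B' : Conj ι, ConjExtends B' B → B' ≠ B → ¬ SuffCauseFor D B' ω

/-- `B` is a singular (minimal sufficient) cause for `ω`: it is the unique minimal
sufficient cause for `ω`. -/
def SingularFor {ι Ω : Type*} (D : Ω → Assign ι → Bool) (B : Conj ι) (ω : Ω) : Prop :=
  MinSuffCauseFor D B ω ∧ ∀ B' : Conj ι, B' ≠ B → ¬ MinSuffCauseFor D B' ω

/-- `B` is singular for `D(C, Ω)`: it is singular for some individual. -/
def Singular {ι Ω : Type*} (D : Ω → Assign ι → Bool) (B : Conj ι) : Prop :=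
  ∃ ω : Ω, SingularFor D B ω

/-- The literal at coordinate `i` with target value `v` has a positive monotonic
effect on `D` relative to `C`. -/
def PosMonotone {ι Ω : Type*} [DecidableEq ι] (D : Ω → Assign ι → Bool)
    (i : ι) (v : Bool) : Prop :=
  ∀ (ω : Ω) (c : Assign ι),
    D ω (Function.update c i (!v)) = true → D ω (Function.update c i v) = true

/-- `T` is a tree on the finite vertex set `V`: a set of unordered pairs of
distinct elements of `V` with `|T| = |V| - 1` such that any two vertices of `V`
are connected by a path of edges of `T`. -/
def IsTreeOn {ι : Type*} (V : Finset ι) (T : Finset (Sym2 ι)) : Prop :=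
  (∀ e ∈ T, ¬ e.IsDiag ∧ ∀ i ∈ e, i ∈ V) ∧
  T.card = V.card - 1 ∧
  (∀ x ∈ V, ∀ y ∈ V, Relation.ReflTransGen (fun a b => s(a, b) ∈ T) x y)


open Classical in
lemma domain_card_lt {ι : Type*} [Fintype ι] [DecidableEq ι] (B₀ B' : Conj ι)
    (hext : ConjExtends B₀ B') (hne : B₀ ≠ B') :
    (Finset.univ.filter fun i => (B₀ i).isSome).card <
    (Finset.univ.filter fun i => (B' i).isSome).card := by
  apply Finset.card_lt_card
  constructor
  · intro i hi
    simp only [Finset.mem_filter, Finset.mem_univ, true_and] at *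
    obtain ⟨v, hv⟩ := Option.isSome_iff_exists.mp hi
    exact Option.isSome_iff_exists.mpr ⟨v, hext i v hv⟩
  · intro hsub
    apply hne
    funext i
    cases h0 : B₀ i with
    | some v => exact (hext i v h0).symm
    | none =>
      cases h1 : B' i with
      | none => rfl
      | some v =>
        have hi : i ∈ Finset.univ.filter fun j => (B' j).isSome := by
          simp [h1]
        have := hsub hi
        simp [h0] at this

open Classical in
lemma exists_minimal_aux {ι Ω : Type*} [Fintype ι] [DecidableEq ι]
    (D : Ω → Assign ι → Bool) (ω : Ω) :
    ∀ (n : ℕ) (B' : Conj ι),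
      (Finset.univ.filter fun i => (B' i).isSome).card ≤ n →
      SuffCauseFor D B' ω →
      ∃ B'', ConjExtends B'' B' ∧ MinSuffCauseFor D B'' ω := by
  intro n
  induction n with
  | zero =>
    intro B' hc hs
    refine ⟨B', fun i v h => h, hs, ?_⟩
    intro B₀ hext hne _
    have := domain_card_lt B₀ B' hext hne
    omega
  | succ n ih =>
    intro B' hc hs
    by_cases hmin : ∀ B₀, ConjExtends B₀ B' → B₀ ≠ B' → ¬ SuffCauseFor D B₀ ω
    · exact ⟨B', fun i v h => h, hs, hmin⟩
    · push_neg at hmin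
      obtain ⟨B₀, hext, hne, hs₀⟩ := hmin
      have hlt := domain_card_lt B₀ B' hext hne
      obtain ⟨B'', hext'', hmin''⟩ := ih B₀ (by omega) hs₀
      exact ⟨B'', fun i v h => hext i v (hext'' i v h), hmin''⟩

lemma exists_minimal {ι Ω : Type*} [Fintype ι] [DecidableEq ι]
    (D : Ω → Assign ι → Bool) (ω : Ω) (B' : Conj ι) (hs : SuffCauseFor D B' ω) :
    ∃ B'', ConjExtends B'' B' ∧ MinSuffCauseFor D B'' ω :=
  exists_minimal_aux D ω _ B' le_rfl hs

/-- Theorem 5.1: characterization of singularity in terms of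
potential outcomes. -/
theorem singular_iff {ι Ω : Type*} [Fintype ι] [DecidableEq ι] [Nonempty ι] [Nonempty Ω]
    (D : Ω → Assign ι → Bool) (C₁ C₂ : Finset ι)
    (hdisj : Disjoint C₁ C₂) (hunion : C₁ ∪ C₂ = Finset.univ)
    (b : ι → Bool) :
    Singular D (fun i => if i ∈ C₁ then some (b i) else none) ↔
      ∃ ω : Ω, ∀ (c₂ : ι → Bool) (β : ι → Bool),
        (D ω (fun i => if i ∈ C₁ then (if β i then b i else !(b i)) else c₂ i) = true ↔
          ∀ i ∈ C₁, β i = true) := by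

  classical
  set B : Conj ι := (fun i => if i ∈ C₁ then some (b i) else none) with hB
  have satB : ∀ c : Assign ι, Satisfies c B ↔ ∀ i ∈ C₁, c i = b i := by
    intro c
    constructor
    · intro h i hi
      exact h i (b i) (by simp [hB, hi])
    · intro h i v hv
      by_cases hi : i ∈ C₁
      · simp [hB, hi] at hv
        rw [← hv]; exact h i hi
      · simp [hB, hi] at hv
  have main : Singular D B ↔ ∃ ω : Ω, ∀ c : Assign ι, D ω c = true ↔ Satisfies c B := by
    constructor
    · rintro ⟨ω, ⟨⟨hsuf, _⟩, huniq⟩⟩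
      refine ⟨ω, fun c => ⟨?_, fun hc => hsuf c hc⟩⟩
      intro hD
      by_contra hns
      rw [satB] at hns
      push_neg at hns
      obtain ⟨i₀, hi₀, hci⟩ := hns
      have hsc : SuffCauseFor D (fun i => some (c i)) ω := by
        intro c' hc'
        have : c' = c := funext fun i => hc' i (c i) rfl
        rw [this]; exact hD
      obtain ⟨B'', hext, hmin⟩ := exists_minimal D ω _ hsc
      refine huniq B'' ?_ hmin
      intro heq
      have hBi : B'' i₀ = some (b i₀) := by rw [heq]; simp [hB, hi₀]
      have := hext i₀ (b i₀) hBi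
      simp at this
      exact hci this
    · rintro ⟨ω, P⟩
      refine ⟨ω, ⟨⟨fun c hc => (P c).mpr hc, ?_⟩, ?_⟩⟩
      · intro B' hext hne hs'
        have hdiff : ∃ i, B' i ≠ B i := by
          by_contra h; push_neg at h; exact hne (funext h)
        obtain ⟨i, hi⟩ := hdiff
        have hBi' : B' i = none := by
          cases h : B' i with
          | none => rfl
          | some v => exact absurd (hext i v h) (fun hx => hi (h.trans hx.symm))
        have hiC : i ∈ C₁ := by
          by_contra h
          simp [hB, h, hBi'] at hi
        set c : Assign ι := fun j => if j = i then !(b j) else b j with hc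
        have hsat : Satisfies c B' := by
          intro j w hw
          have hBj := hext j w hw
          have hjC : j ∈ C₁ ∧ w = b j := by
            by_cases h : j ∈ C₁
            · simp [hB, h] at hBj; exact ⟨h, hBj.symm⟩
            · simp [hB, h] at hBj
          have hji : j ≠ i := fun h => by rw [h, hBi'] at hw; cases hw
          simp [hc, hji, hjC.2]
        have hD := hs' c hsat
        have := (satB c).mp ((P c).mp hD) i hiC
        simp [hc] at this
      · intro B' hne hmin'
        obtain ⟨hs', hm'⟩ := hmin'
        have hBext : ConjExtends B B' := by
          intro i v hv
          have hiv : i ∈ C₁ ∧ v = b i := by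
            by_cases h : i ∈ C₁
            · simp [hB, h] at hv; exact ⟨h, hv.symm⟩
            · simp [hB, h] at hv
          by_contra hB'
          set c : Assign ι := fun j =>
            if j = i then !(b i) else (match B' j with | some w => w | none => b j) with hc
          have hsat : Satisfies c B' := by
            intro j w hw
            by_cases hj : j = i
            · have hwb : w ≠ b i := by
                intro h
                apply hB'
                rw [← hj, hw, h, hiv.2]
              have hwn : w = !(b i) := by
                cases w <;> cases h : b i <;> simp_all
              simp [hc, hj, hwn]
            · simp [hc, hj, hw]
          have hD := hs' c hsat
          have := (satB c).mp ((P c).mp hD) i hiv.1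
          simp [hc] at this
        exact hm' B hBext (Ne.symm hne) (fun c hc => (P c).mpr hc)
  rw [main]
  constructor
  · rintro ⟨ω, P⟩
    refine ⟨ω, fun c₂ β => ?_⟩
    rw [P, satB]
    constructor
    · intro h i hi
      have := h i hi
      simp [hi] at this
      cases hβ : β i
      · rw [hβ] at this; simp at this
      · rfl
    · intro h i hi
      simp [hi, h i hi]
  · rintro ⟨ω, h⟩
    refine ⟨ω, fun c => ?_⟩
    have hg : (fun i => if i ∈ C₁ then (if (c i == b i) then b i else !(b i)) else c i) = c := by
      funext i
      by_cases hi : i ∈ C₁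
      · simp only [hi, if_true]
        cases hcb : (c i == b i)
        · simp at hcb; cases h2 : c i <;> cases h3 : b i <;> simp_all
        · simp at hcb; simp [hcb]
      · simp [hi]
    have := h c (fun i => c i == b i)
    rw [hg] at this
    rw [this, satB]
    constructor
    · intro hh i hi
      have := hh i hi
      simpa using this
    · intro hh i hi
      simp [hh i hi]
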